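/- SEC sufficient condition for the ℓ_{1-2}-REC: If (√t − 1)·σ_min(s+t) > (√s + 1)·σ_max(t), then A satisfies the ℓ_{1-2}-REC(s,t); moreover φ(s,t) ≥ σ_min(s+t) − ((√s+1)/(√t−1))·σ_max(t) > 0. -/

import Mathlib

open Finset

noncomputable def l1 {k : ℕ} (x : Fin k → ℝ) : ℝ := ∑ i, |x i|

noncomputable def l2 {k : ℕ} (x : Fin k → ℝ) : ℝ := Real.sqrt (∑ i, (x i)^2)

def restr {k : ℕ} (I : Finset (Fin k)) (x : Fin k → ℝ) : Fin k → ℝ :=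
  fun i => if i ∈ I then x i else 0


def TLargest {k : ℕ} (x : Fin k → ℝ) (I : Finset (Fin k)) (t : ℕ) (T : Finset (Fin k)) : Prop :=
  T ⊆ Iᶜ ∧ T.card = min t Iᶜ.card ∧ ∀ i ∈ T, ∀ j ∈ Iᶜ \ T, |x j| ≤ |x i|

/-! ### Auxiliary lemmas -/

lemma l2_eq_norm {k : ℕ} (x : Fin k → ℝ) :
    l2 x = ‖(WithLp.equiv 2 (Fin k → ℝ)).symm x‖ := by
  rw [EuclideanSpace.norm_eq]
  simp [l2, sq_abs]

lemma l2_add {k : ℕ} (u v : Fin k → ℝ) : l2 (u + v) ≤ l2 u + l2 v := by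
  rw [l2_eq_norm, l2_eq_norm, l2_eq_norm]
  exact norm_add_le ((WithLp.equiv 2 (Fin k → ℝ)).symm u) ((WithLp.equiv 2 (Fin k → ℝ)).symm v)

lemma l2_nonneg {k : ℕ} (x : Fin k → ℝ) : 0 ≤ l2 x := Real.sqrt_nonneg _

lemma l1_nonneg {k : ℕ} (x : Fin k → ℝ) : 0 ≤ l1 x :=
  Finset.sum_nonneg fun i _ => abs_nonneg _

lemma l2_neg {k : ℕ} (x : Fin k → ℝ) : l2 (-x) = l2 x := by
  simp [l2, neg_sq]

lemma l2_le_add {k : ℕ} (u v : Fin k → ℝ) : l2 u ≤ l2 (u + v) + l2 v := by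
  have h : u = (u + v) + (-v) := by abel
  calc l2 u = l2 ((u + v) + (-v)) := by rw [← h]
    _ ≤ l2 (u + v) + l2 (-v) := l2_add _ _
    _ = l2 (u + v) + l2 v := by rw [l2_neg]

lemma l1_restr {k : ℕ} (S : Finset (Fin k)) (x : Fin k → ℝ) :
    l1 (restr S x) = ∑ i ∈ S, |x i| := by
  simp [l1, restr, apply_ite abs, Finset.sum_ite_mem]

lemma l2_restr {k : ℕ} (S : Finset (Fin k)) (x : Fin k → ℝ) :
    l2 (restr S x) = Real.sqrt (∑ i ∈ S, (x i)^2) := by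
  have : ∀ i, (restr S x i)^2 = if i ∈ S then (x i)^2 else 0 := by
    intro i
    by_cases h : i ∈ S <;> simp [restr, h]
  simp only [l2, this, Finset.sum_ite_mem, Finset.univ_inter]

lemma restr_split {k : ℕ} {B S : Finset (Fin k)} (hBS : B ⊆ S) (x : Fin k → ℝ) :
    restr S x = restr B x + restr (S \ B) x := by
  funext i
  by_cases hB : i ∈ B
  · have hS : i ∈ S := hBS hB
    simp [restr, hB, hS]
  · by_cases hS : i ∈ S <;> simp [restr, hB, hS]

lemma l1_restr_split {k : ℕ} {B S : Finset (Fin k)} (hBS : B ⊆ S) (x : Fin k → ℝ) :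
    l1 (restr S x) = l1 (restr B x) + l1 (restr (S \ B) x) := by
  rw [l1_restr, l1_restr, l1_restr, ← Finset.sum_sdiff hBS]
  ring

lemma exists_largest {k : ℕ} (f : Fin k → ℝ) :
    ∀ (c : ℕ) (S : Finset (Fin k)), c ≤ S.card →
      ∃ B ⊆ S, B.card = c ∧ ∀ i ∈ B, ∀ j ∈ S \ B, f j ≤ f i := by
  intro c
  induction c with
  | zero => exact fun S _ => ⟨∅, Finset.empty_subset _, rfl, by simp⟩
  | succ c ih =>
    intro S hc
    obtain ⟨B, hBS, hBc, hB⟩ := ih S (Nat.le_of_succ_le hc)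
    have hne : (S \ B).Nonempty := by
      rw [← Finset.card_pos, Finset.card_sdiff_of_subset hBS, hBc]
      omega
    obtain ⟨i0, hi0, hmax⟩ := Finset.exists_max_image (S \ B) f hne
    have hi0B : i0 ∉ B := (Finset.mem_sdiff.mp hi0).2
    refine ⟨insert i0 B, ?_, ?_, ?_⟩
    · exact Finset.insert_subset (Finset.mem_sdiff.mp hi0).1 hBS
    · rw [Finset.card_insert_of_notMem hi0B, hBc]
    · intro i hi j hj
      have hj' : j ∈ S \ B := by
        rcases Finset.mem_sdiff.mp hj with ⟨h1, h2⟩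
        exact Finset.mem_sdiff.mpr ⟨h1, fun h => h2 (Finset.mem_insert_of_mem h)⟩
      rcases Finset.mem_insert.mp hi with rfl | hiB
      · exact hmax j hj'
      · exact hB i hiB j hj'

/-- The key block decomposition estimate. -/
lemma key_lemma {k t : ℕ} (ht : 1 ≤ t) (N : (Fin k → ℝ) → ℝ) (C : ℝ) (hC : 0 ≤ C)
    (hadd : ∀ u v, N (u + v) ≤ N u + N v)
    (hsp : ∀ v : Fin k → ℝ, ∀ K : Finset (Fin k), K.card ≤ t →
      (∀ i ∉ K, v i = 0) → N v ≤ C * l2 v)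
    (x : Fin k → ℝ) :
    ∀ S : Finset (Fin k), ∀ μ : ℝ, 0 ≤ μ → (∀ j ∈ S, |x j| ≤ μ) →
      N (restr S x) ≤ C * (Real.sqrt t * μ + l1 (restr S x) / Real.sqrt t) := by
  intro S
  induction S using Finset.strongInduction with
  | _ S ih =>
    intro μ hμ hμS
    have hst1 : (1:ℝ) ≤ Real.sqrt t := by
      rw [show (1:ℝ) = Real.sqrt 1 by simp]
      exact Real.sqrt_le_sqrt (by exact_mod_cast ht)
    set st := Real.sqrt (t:ℝ) with hst
    have hst0 : 0 < st := lt_of_lt_of_le one_pos hst1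
    have hstsq : st ^ 2 = (t:ℝ) := Real.sq_sqrt (by positivity)
    have hL0 : 0 ≤ l1 (restr S x) := l1_nonneg _
    by_cases hcard : S.card ≤ t
    · -- base case: S itself is t-sparse
      have h1 : N (restr S x) ≤ C * l2 (restr S x) :=
        hsp _ S hcard (fun i hi => by simp [restr, hi])
      have h2 : l2 (restr S x) ≤ Real.sqrt (μ * l1 (restr S x)) := by
        rw [l2_restr, l1_restr]
        apply Real.sqrt_le_sqrt
        rw [Finset.mul_sum]
        apply Finset.sum_le_sum
        intro i hi
        have h := hμS i hi
        nlinarith [abs_nonneg (x i), sq_abs (x i)]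
      have h3 : Real.sqrt (μ * l1 (restr S x)) ≤ st * μ + l1 (restr S x) / st := by
        have hrw : μ * l1 (restr S x) = (st * μ) * (l1 (restr S x) / st) := by
          field_simp
        rw [hrw]
        have ha : 0 ≤ st * μ := by positivity
        have hb : 0 ≤ l1 (restr S x) / st := by positivity
        calc Real.sqrt ((st * μ) * (l1 (restr S x) / st))
            ≤ Real.sqrt ((st * μ + l1 (restr S x) / st)^2) :=
              Real.sqrt_le_sqrt (by nlinarith)
          _ = st * μ + l1 (restr S x) / st := Real.sqrt_sq (by positivity)
      calc N (restr S x) ≤ C * l2 (restr S x) := h1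
        _ ≤ C * (st * μ + l1 (restr S x) / st) :=
            mul_le_mul_of_nonneg_left (h2.trans h3) hC
    · -- inductive step: peel off the t largest entries
      push_neg at hcard
      obtain ⟨B, hBS, hBc, hB⟩ := exists_largest (fun i => |x i|) t S hcard.le
      have hBne : B.Nonempty := Finset.card_pos.mp (by omega)
      set μ' := B.inf' hBne (fun i => |x i|) with hμ'
      have hμ'0 : 0 ≤ μ' := Finset.le_inf' hBne _ (fun i _ => abs_nonneg _)
      have hμ'le : ∀ j ∈ S \ B, |x j| ≤ μ' := fun j hj =>
        Finset.le_inf' hBne _ (fun i hi => hB i hi j hj)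
      have hssub : S \ B ⊂ S := Finset.sdiff_ssubset hBS hBne
      have hIH := ih (S \ B) hssub μ' hμ'0 hμ'le
      have hNB : N (restr B x) ≤ C * (st * μ) := by
        have hspB := hsp (restr B x) B (le_of_eq hBc) (fun i hi => by simp [restr, hi])
        have hl2B : l2 (restr B x) ≤ st * μ := by
          rw [l2_restr]
          calc Real.sqrt (∑ i ∈ B, (x i) ^ 2)
              ≤ Real.sqrt (∑ _i ∈ B, μ^2) :=
                Real.sqrt_le_sqrt (Finset.sum_le_sum fun i hi => by
                  nlinarith [hμS i (hBS hi), sq_abs (x i), abs_nonneg (x i)])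
            _ = Real.sqrt ((t:ℝ) * μ^2) := by
                rw [Finset.sum_const, hBc, nsmul_eq_mul]
            _ = st * μ := by
                rw [show (t:ℝ) * μ^2 = (st * μ)^2 by rw [mul_pow, hstsq],
                  Real.sqrt_sq (by positivity)]
        calc N (restr B x) ≤ C * l2 (restr B x) := hspB
          _ ≤ C * (st * μ) := mul_le_mul_of_nonneg_left hl2B hC
      have hμ'B : (t:ℝ) * μ' ≤ l1 (restr B x) := by
        rw [l1_restr]
        calc (t:ℝ) * μ' = ∑ _i ∈ B, μ' := by rw [Finset.sum_const, hBc, nsmul_eq_mul]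
          _ ≤ ∑ i ∈ B, |x i| := Finset.sum_le_sum fun i hi => Finset.inf'_le _ hi
      have hl1split := l1_restr_split hBS x
      have h5 : st * μ' ≤ l1 (restr B x) / st := by
        rw [le_div_iff₀ hst0]
        calc st * μ' * st = st^2 * μ' := by ring
          _ = (t:ℝ) * μ' := by rw [hstsq]
          _ ≤ l1 (restr B x) := hμ'B
      have h6 : C * (st * μ') ≤ C * (l1 (restr B x) / st) :=
        mul_le_mul_of_nonneg_left h5 hC
      calc N (restr S x) = N (restr B x + restr (S \ B) x) := by rw [← restr_split hBS]
        _ ≤ N (restr B x) + N (restr (S \ B) x) := hadd _ _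
        _ ≤ C * (st * μ) + C * (st * μ' + l1 (restr (S \ B) x) / st) :=
            add_le_add hNB hIH
        _ ≤ C * (st * μ + l1 (restr S x) / st) := by
            rw [hl1split, add_div]
            have hexp : C * (st * μ' + l1 (restr (S \ B) x) / st)
                = C * (st * μ') + C * (l1 (restr (S \ B) x) / st) := by ring
            have hexp2 : C * (st * μ + (l1 (restr B x) / st + l1 (restr (S \ B) x) / st))
                = C * (st * μ) + C * (l1 (restr B x) / st)
                  + C * (l1 (restr (S \ B) x) / st) := by ring
            rw [hexp, hexp2]
            linarith

theorem stmt15 {m n : ℕ} (A : Matrix (Fin m) (Fin n) ℝ) (s t : ℕ) (ht : 1 < t)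
    (σmin σmax : ℝ)
    (hmin : ∀ (x : Fin n → ℝ) (K : Finset (Fin n)), K.card ≤ s + t →
      (∀ i ∉ K, x i = 0) → σmin * l2 x ≤ l2 (A.mulVec x))
    (hmax : ∀ (x : Fin n → ℝ) (K : Finset (Fin n)), K.card ≤ t →
      (∀ i ∉ K, x i = 0) → l2 (A.mulVec x) ≤ σmax * l2 x)
    (hcond : (Real.sqrt t - 1) * σmin > (Real.sqrt s + 1) * σmax) :
    0 < σmin - (Real.sqrt s + 1) / (Real.sqrt t - 1) * σmax ∧
    ∀ (x : Fin n → ℝ) (I T : Finset (Fin n)), I.card ≤ s →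
      l1 (restr Iᶜ x) ≤ l1 (restr I x) + l2 x → TLargest x I t T →
      (σmin - (Real.sqrt s + 1) / (Real.sqrt t - 1) * σmax) * l2 (restr (I ∪ T) x) ≤
        l2 (A.mulVec x) := by
  have hst1 : (1:ℝ) < Real.sqrt t := by
    rw [show (1:ℝ) = Real.sqrt 1 by simp]
    exact Real.sqrt_lt_sqrt (by norm_num) (by exact_mod_cast ht)
  set st := Real.sqrt (t:ℝ) with hstdef
  set ss := Real.sqrt (s:ℝ) with hssdef
  have hss0 : 0 ≤ ss := Real.sqrt_nonneg _
  have hstpos : (0:ℝ) < st - 1 := by linarith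
  have hst0 : (0:ℝ) < st := by linarith
  have hstsq : st ^ 2 = (t:ℝ) := Real.sq_sqrt (by positivity)
  have hpart1 : 0 < σmin - (ss + 1) / (st - 1) * σmax := by
    rw [sub_pos, div_mul_eq_mul_div, div_lt_iff₀ hstpos]
    nlinarith [hcond]
  refine ⟨hpart1, ?_⟩
  intro x I T hI hcone hTL
  obtain ⟨hTsub, hTcard, hTmax⟩ := hTL
  rcases Nat.eq_zero_or_pos n with hn | hn
  · subst hn
    have h1 : l2 (restr (I ∪ T) x) = 0 := by simp [l2]
    have h2 : l2 (A.mulVec x) = 0 := by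
      simp [l2, Matrix.mulVec, dotProduct]
    rw [h1, h2, mul_zero]
  · -- σmax is nonnegative
    have hσmax : 0 ≤ σmax := by
      set i0 : Fin n := ⟨0, hn⟩ with hi0
      set e : Fin n → ℝ := fun j => if j = i0 then 1 else 0 with he
      have hc1 : ({i0} : Finset (Fin n)).card ≤ t := by
        rw [Finset.card_singleton]; omega
      have hz : ∀ i ∉ ({i0} : Finset (Fin n)), e i = 0 := by
        intro i hi
        simp only [Finset.mem_singleton] at hi
        simp [he, hi]
      have h1 := hmax e {i0} hc1 hz
      have h2 : l2 e = 1 := by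
        have : ∀ j, (e j)^2 = if j = i0 then 1 else 0 := by
          intro j; by_cases h : j = i0 <;> simp [he, h]
        simp [l2, this, Finset.sum_ite_eq']
      rw [h2, mul_one] at h1
      exact le_trans (l2_nonneg _) h1
    by_cases hbig : t ≤ Iᶜ.card
    · -- main case: T has exactly t elements
      have hTc : T.card = t := by rw [hTcard]; omega
      have hTne : T.Nonempty := Finset.card_pos.mp (by omega)
      set μ := T.inf' hTne (fun i => |x i|) with hμdef
      have hμ0 : 0 ≤ μ := Finset.le_inf' hTne _ (fun i _ => abs_nonneg _)
      have hJc : (I ∪ T)ᶜ = Iᶜ \ T := by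
        ext i
        simp [not_or]
      have hwμ : ∀ j ∈ (I ∪ T)ᶜ, |x j| ≤ μ := by
        intro j hj
        rw [hJc] at hj
        exact Finset.le_inf' hTne _ (fun i hi => hTmax i hi j hj)
      -- apply the key lemma twice
      have hw2 : l2 (restr (I ∪ T)ᶜ x) ≤
          1 * (st * μ + l1 (restr (I ∪ T)ᶜ x) / st) := by
        exact key_lemma (le_of_lt ht) l2 1 zero_le_one
          (fun u v => l2_add u v)
          (fun v K _ _ => by rw [one_mul]) x (I ∪ T)ᶜ μ hμ0 hwμ
      have hAw : l2 (A.mulVec (restr (I ∪ T)ᶜ x)) ≤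
          σmax * (st * μ + l1 (restr (I ∪ T)ᶜ x) / st) := by
        exact key_lemma (le_of_lt ht) (fun v => l2 (A.mulVec v)) σmax hσmax
          (fun u v => by
            show l2 (A.mulVec (u + v)) ≤ l2 (A.mulVec u) + l2 (A.mulVec v)
            rw [Matrix.mulVec_add]; exact l2_add _ _)
          hmax x (I ∪ T)ᶜ μ hμ0 hwμ
      -- the J-part is (s+t)-sparse
      have hAv : σmin * l2 (restr (I ∪ T) x) ≤ l2 (A.mulVec (restr (I ∪ T) x)) := by
        apply hmin (restr (I ∪ T) x) (I ∪ T)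
        · calc (I ∪ T).card ≤ I.card + T.card := Finset.card_union_le _ _
            _ ≤ s + t := by omega
        · intro i hi; simp [restr, hi]
      have hxsplit : x = restr (I ∪ T) x + restr (I ∪ T)ᶜ x := by
        funext i
        show x i = (if i ∈ I ∪ T then x i else 0) + (if i ∈ (I ∪ T)ᶜ then x i else 0)
        by_cases h : i ∈ I ∪ T
        · rw [if_pos h, if_neg (fun hc => (Finset.mem_compl.mp hc) h), add_zero]
        · rw [if_neg h, if_pos (Finset.mem_compl.mpr h), zero_add]
      have hAsplit : l2 (A.mulVec (restr (I ∪ T) x)) ≤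
          l2 (A.mulVec x) + l2 (A.mulVec (restr (I ∪ T)ᶜ x)) := by
        have hmv : A.mulVec x =
            A.mulVec (restr (I ∪ T) x) + A.mulVec (restr (I ∪ T)ᶜ x) := by
          rw [← Matrix.mulVec_add, ← hxsplit]
        rw [hmv]
        exact l2_le_add _ _
      -- cone inequality manipulations
      have hIcsplit : l1 (restr Iᶜ x) = l1 (restr T x) + l1 (restr (I ∪ T)ᶜ x) := by
        rw [hJc]
        have h := l1_restr_split hTsub x
        linarith [h]
      have hTl1 : (t:ℝ) * μ ≤ l1 (restr T x) := by
        rw [l1_restr]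
        calc (t:ℝ) * μ = ∑ _i ∈ T, μ := by rw [Finset.sum_const, hTc, nsmul_eq_mul]
          _ ≤ ∑ i ∈ T, |x i| := Finset.sum_le_sum fun i hi => Finset.inf'_le _ hi
      have hCS : l1 (restr I x) ≤ ss * l2 (restr (I ∪ T) x) := by
        rw [l1_restr]
        have h1 : (∑ i ∈ I, |x i|)^2 ≤ (I.card : ℝ) * ∑ i ∈ I, |x i|^2 :=
          sq_sum_le_card_mul_sum_sq
        calc ∑ i ∈ I, |x i|
            = Real.sqrt ((∑ i ∈ I, |x i|)^2) :=
              (Real.sqrt_sq (Finset.sum_nonneg fun i _ => abs_nonneg _)).symm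
          _ ≤ Real.sqrt ((I.card:ℝ) * ∑ i ∈ I, (x i)^2) := by
              apply Real.sqrt_le_sqrt
              simpa [sq_abs] using h1
          _ = Real.sqrt (I.card:ℝ) * Real.sqrt (∑ i ∈ I, (x i)^2) :=
              Real.sqrt_mul (Nat.cast_nonneg _) _
          _ ≤ ss * l2 (restr (I ∪ T) x) := by
              apply mul_le_mul
              · exact Real.sqrt_le_sqrt (by exact_mod_cast hI)
              · rw [l2_restr]
                exact Real.sqrt_le_sqrt (Finset.sum_le_sum_of_subset_of_nonneg
                  Finset.subset_union_left (fun i _ _ => sq_nonneg _))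
              · positivity
              · exact hss0
      have hx2 : l2 x ≤ l2 (restr (I ∪ T) x) + l2 (restr (I ∪ T)ᶜ x) := by
        conv_lhs => rw [hxsplit]
        exact l2_add _ _
      -- abbreviations
      set v2 := l2 (restr (I ∪ T) x) with hv2def
      set w2 := l2 (restr (I ∪ T)ᶜ x) with hw2def
      set L := l1 (restr (I ∪ T)ᶜ x) with hLdef
      have hL0 : 0 ≤ L := l1_nonneg _
      have hv20 : 0 ≤ v2 := l2_nonneg _
      have hstne : st ≠ 0 := ne_of_gt hst0
      -- combine the cone inequality
      have hmain : (t:ℝ) * μ + L ≤ (ss + 1) * v2 + (st * μ + L / st) := by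
        have h1 : (t:ℝ) * μ + L ≤ l1 (restr Iᶜ x) := by
          rw [hIcsplit]; linarith [hTl1]
        have h2 : l1 (restr Iᶜ x) ≤ ss * v2 + (v2 + w2) := by
          calc l1 (restr Iᶜ x) ≤ l1 (restr I x) + l2 x := hcone
            _ ≤ ss * v2 + (v2 + w2) := add_le_add hCS hx2
        rw [one_mul] at hw2
        nlinarith [h1, h2, hw2]
      have hkey1 : (st - 1) * (st * μ + L / st) ≤ (ss + 1) * v2 := by
        have hexp : (st - 1) * (st * μ + L / st)
            = st^2 * μ + L - (st * μ + L / st) := by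
          field_simp
        rw [hexp, hstsq]
        linarith [hmain]
      have hdiv : st * μ + L / st ≤ (ss + 1) / (st - 1) * v2 := by
        rw [div_mul_eq_mul_div, le_div_iff₀ hstpos]
        linear_combination hkey1
      have h4 : σmin * v2 ≤ l2 (A.mulVec x) + σmax * (st * μ + L / st) :=
        le_trans hAv (le_trans hAsplit (by linarith [hAw]))
      have h5 : σmax * (st * μ + L / st) ≤ σmax * ((ss + 1) / (st - 1) * v2) :=
        mul_le_mul_of_nonneg_left hdiv hσmax
      have hfinal : (σmin - (ss + 1) / (st - 1) * σmax) * v2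
          = σmin * v2 - σmax * ((ss + 1) / (st - 1) * v2) := by ring
      rw [hfinal]
      linarith
    · -- degenerate case: T = Iᶜ, so I ∪ T = univ
      push_neg at hbig
      have hTeq : T = Iᶜ := by
        apply Finset.eq_of_subset_of_card_le hTsub
        rw [hTcard]; omega
      have hunion : I ∪ T = Finset.univ := by
        rw [hTeq, Finset.union_compl]
      have hrestr : restr (I ∪ T) x = x := by
        funext i; simp [restr, hunion]
      have hcardn : (Finset.univ : Finset (Fin n)).card ≤ s + t := by
        have h := Finset.card_add_card_compl I
        rw [Fintype.card_fin] at h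
        rw [Finset.card_univ, Fintype.card_fin]
        have hIc : Iᶜ.card < t := hbig
        omega
      have hA := hmin x Finset.univ hcardn (fun i hi => absurd (Finset.mem_univ i) hi)
      rw [hrestr]
      have hc0 : 0 ≤ (ss + 1) / (st - 1) * σmax :=
        mul_nonneg (div_nonneg (by linarith) (by linarith)) hσmax
      have hl2x : 0 ≤ l2 x := l2_nonneg _
      nlinarith [hA, mul_nonneg hc0 hl2x]
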